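/- Supermartingale argument for geometric tails (abstraction of the proof of Theorem 1): let (Zₙ)ₙ≥₀ be a Markov chain on Ω with V̄ : Ω → [1,∞), a small set C ⊆ Ω such that from any z ∈ C the event of interest occurs within the next step with probability at least ω > 0, drift K̄(V̄)(z) ≤ λ₀V̄(z) outside C with λ₀ ∈ (0,1), and B = max{1, sup_{z ∈ C} K̄(V̄)(z)/(λ₀V̄(z))} < ∞. Then Mₙ = λ₀⁻ⁿ B^{-N_{n-1}} V̄(Zₙ), where Nₙ counts visits to C up to time n, is a supermartingale, and consequently the hitting time τ of the event satisfies pr(τ > n) ≤ (1-ω)^j + E{V̄(Z₀)} λ₀ⁿ B^{j-1} for all integers n, j ≥ 0, yielding geometric tails pr(τ > n) ≤ C₀κ₀ⁿ for some C₀ < ∞, κ₀ ∈ (0,1) upon choosing j = ⌈n/m₀⌉ with m₀ such that λ₀B^{1/m₀} < 1. -/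

import Mathlib

open scoped Classical

open MeasureTheory ProbabilityTheory

private lemma azpow {a : ℝ} (ha : a ≠ 0) (k : ℕ) :
    a ^ (-((k + 1 : ℕ) : ℤ)) * a = a ^ (-(k : ℤ)) := by
  rw [zpow_neg, zpow_neg, zpow_natCast, zpow_natCast, pow_succ]
  field_simp

/-- Supermartingale argument for geometric tails (abstraction of the proof of Theorem 1):
for a Markov chain `Z` with kernel `K` and Lyapunov function `V ≥ 1`, a small set `C`
from which the target set `G` is reached in one step with probability at least `ω₀`,
drift `K(V) ≤ λ₀V` off `C`, and `K(V) ≤ λ₀ B V` on `C` (with `B ≥ 1`), the process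
`Mₙ = λ₀⁻ⁿ B^{-N_{n-1}} V(Zₙ)` (where `N n` counts visits to `C` before time `n`) is a
supermartingale; the hitting time `τ` of `G` satisfies
`pr(τ > n) ≤ (1-ω₀)ʲ + E[V(Z₀)] λ₀ⁿ B^{j-1}` for all `n, j`, whence geometric tails. -/
theorem stmt14 {Ωp S : Type*} [m : MeasurableSpace Ωp] [MeasurableSpace S]
    (P : Measure Ωp) [IsProbabilityMeasure P]
    (K : Kernel S S) [IsMarkovKernel K]
    (Z : ℕ → Ωp → S) (hZm : ∀ n, Measurable (Z n))
    (𝔽 : Filtration ℕ m)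
    (hadapted : ∀ n, Measurable[𝔽 n] (Z n))
    -- the Markov property with respect to the kernel `K`
    (hMarkov : ∀ (n : ℕ) (g : S → ℝ), Measurable g →
      Integrable (fun ω => g (Z (n + 1) ω)) P →
      P[(fun ω => g (Z (n + 1) ω))|𝔽 n] =ᵐ[P] fun ω => ∫ y, g y ∂(K (Z n ω)))
    (V : S → ℝ) (hVm : Measurable V) (hV1 : ∀ s, 1 ≤ V s)
    (hVint : ∀ n, Integrable (fun ω => V (Z n ω)) P)
    (C G : Set S) (hC : MeasurableSet C) (hG : MeasurableSet G)
    (ω₀ lam₀ B : ℝ) (hω₀ : 0 < ω₀) (hω₀1 : ω₀ ≤ 1)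
    (hlam : lam₀ ∈ Set.Ioo (0 : ℝ) 1)
    (hsmall : ∀ z ∈ C, ENNReal.ofReal ω₀ ≤ K z G)
    (hdrift : ∀ z ∉ C, ∫ w, V w ∂(K z) ≤ lam₀ * V z)
    (hB1 : 1 ≤ B)
    (hBdrift : ∀ z ∈ C, ∫ w, V w ∂(K z) ≤ lam₀ * B * V z)
    (τ : Ωp → ℕ) (hτ : ∀ ω, τ ω = sInf {n | Z n ω ∈ G})
    (N : ℕ → Ωp → ℕ)
    (hN : ∀ n ω, (N n ω : ℕ) = ∑ k ∈ Finset.range n, if Z k ω ∈ C then 1 else 0)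
    (M : ℕ → Ωp → ℝ)
    (hM : ∀ n ω, M n ω = lam₀ ^ (-(n : ℤ)) * B ^ (-(N n ω : ℤ)) * V (Z n ω)) :
    Supermartingale M 𝔽 P ∧
    (∀ n j : ℕ, (P {ω | n < τ ω}).toReal
        ≤ (1 - ω₀) ^ j + (∫ ω, V (Z 0 ω) ∂P) * lam₀ ^ n * B ^ ((j : ℤ) - 1)) ∧
    (∀ m₀ : ℕ, 0 < m₀ → lam₀ * B ^ ((1 : ℝ) / m₀) < 1 →
      ∃ C₀ ≥ (0 : ℝ), ∃ κ₀ ∈ Set.Ioo (0 : ℝ) 1,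
        ∀ n : ℕ, (P {ω | n < τ ω}).toReal ≤ C₀ * κ₀ ^ n) := by
  obtain ⟨hlam0, hlam1⟩ := hlam
  have hlamne : lam₀ ≠ 0 := ne_of_gt hlam0
  have hB0 : (0 : ℝ) < B := lt_of_lt_of_le one_pos hB1
  have hBne : B ≠ 0 := ne_of_gt hB0
  have hVpos : ∀ s, 0 < V s := fun s => lt_of_lt_of_le one_pos (hV1 s)
  have hZ𝔽 : ∀ {k n : ℕ}, k ≤ n → Measurable[𝔽 n] (Z k) :=
    fun {k n} h => (hadapted k).mono (𝔽.mono h) le_rfl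
  have hNsucc : ∀ n ω, N (n + 1) ω = N n ω + (if Z n ω ∈ C then 1 else 0) := by
    intro n ω
    rw [hN, hN, Finset.sum_range_succ]
  have hN0 : ∀ ω, N 0 ω = 0 := fun ω => by simpa using hN 0 ω
  -- measurability of N
  have hNmeas : ∀ {n k : ℕ}, n ≤ k + 1 → Measurable[𝔽 k] (N n) := by
    intro n k h
    have hfe : N n = fun ω => ∑ j ∈ Finset.range n, if Z j ω ∈ C then 1 else 0 :=
      funext fun ω => hN n ω
    rw [hfe]
    exact Finset.measurable_sum _ fun j hj =>
      Measurable.ite (hZ𝔽 (by simp at hj; omega) hC) measurable_const measurable_const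
  have hNm : ∀ n, Measurable (N n) := fun n => ((hNmeas (Nat.le_succ n)).mono (𝔽.le _) le_rfl)
  have hBNmeas : ∀ {n k : ℕ}, n ≤ k + 1 → Measurable[𝔽 k] (fun ω => B ^ (-(N n ω : ℤ))) :=
    fun {n k} h => (measurable_from_top (f := fun i : ℕ => B ^ (-(i : ℤ)))).comp (hNmeas h)
  -- positivity / bounds on M
  have hzBpos : ∀ j : ℤ, (0 : ℝ) < B ^ j := fun j => zpow_pos hB0 j
  have hzlampos : ∀ j : ℤ, (0 : ℝ) < lam₀ ^ j := fun j => zpow_pos hlam0 j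
  have hBNle1 : ∀ (k : ℕ), B ^ (-(k : ℤ)) ≤ 1 := fun k =>
    zpow_le_one_of_nonpos₀ hB1 (by omega)
  have hMpos : ∀ n ω, 0 < M n ω := by
    intro n ω
    rw [hM]
    exact mul_pos (mul_pos (hzlampos _) (hzBpos _)) (hVpos _)
  have hMle : ∀ n ω, M n ω ≤ lam₀ ^ (-(n : ℤ)) * V (Z n ω) := by
    intro n ω
    rw [hM]
    have h1 : B ^ (-(N n ω : ℤ)) * V (Z n ω) ≤ 1 * V (Z n ω) :=
      mul_le_mul_of_nonneg_right (hBNle1 _) (hVpos _).le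
    calc lam₀ ^ (-(n : ℤ)) * B ^ (-(N n ω : ℤ)) * V (Z n ω)
        = lam₀ ^ (-(n : ℤ)) * (B ^ (-(N n ω : ℤ)) * V (Z n ω)) := by ring
      _ ≤ lam₀ ^ (-(n : ℤ)) * (1 * V (Z n ω)) :=
          mul_le_mul_of_nonneg_left h1 (hzlampos _).le
      _ = lam₀ ^ (-(n : ℤ)) * V (Z n ω) := by ring
  have hMadp : StronglyAdapted 𝔽 M := by
    intro n
    have hfe : M n = fun ω => lam₀ ^ (-(n : ℤ)) * B ^ (-(N n ω : ℤ)) * V (Z n ω) :=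
      funext (hM n)
    rw [hfe]
    exact ((measurable_const.mul (hBNmeas (n := n) (k := n) (by omega))).mul
      (hVm.comp (hZ𝔽 le_rfl))).stronglyMeasurable
  have hMint : ∀ n, Integrable (M n) P := by
    intro n
    refine Integrable.mono' ((hVint n).const_mul (lam₀ ^ (-(n : ℤ))))
      ((hMadp n).mono (𝔽.le n)).aestronglyMeasurable ?_
    exact Filter.Eventually.of_forall fun ω => by
      rw [Real.norm_eq_abs, abs_of_pos (hMpos n ω)]; exact hMle n ω
  -- the key supermartingale inequality
  have hkey : ∀ n, P[M (n + 1)|𝔽 n] ≤ᵐ[P] M n := by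
    intro n
    set F : Ωp → ℝ := fun ω => lam₀ ^ (-((n + 1 : ℕ) : ℤ)) * B ^ (-(N (n + 1) ω : ℤ)) with hF
    have hFm : StronglyMeasurable[𝔽 n] F :=
      (measurable_const.mul (hBNmeas le_rfl)).stronglyMeasurable
    have hMeq : M (n + 1) = F * fun ω => V (Z (n + 1) ω) := funext fun ω => hM (n + 1) ω
    have h1 : P[M (n + 1)|𝔽 n] =ᵐ[P] F * P[(fun ω => V (Z (n + 1) ω))|𝔽 n] := by
      rw [hMeq]
      exact condExp_mul_of_stronglyMeasurable_left hFm (hMeq ▸ hMint (n + 1)) (hVint (n + 1))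
    have h2 : F * P[(fun ω => V (Z (n + 1) ω))|𝔽 n]
        =ᵐ[P] F * fun ω => ∫ y, V y ∂(K (Z n ω)) :=
      Filter.EventuallyEq.mul (Filter.EventuallyEq.refl _ F)
        (hMarkov n V hVm (hVint (n + 1)))
    refine (h1.trans h2).trans_le (Filter.Eventually.of_forall fun ω => ?_)
    show F ω * ∫ y, V y ∂(K (Z n ω)) ≤ M n ω
    have hFpos : 0 < F ω := mul_pos (hzlampos _) (hzBpos _)
    rw [hM n ω, hF]
    simp only
    rw [hNsucc n ω]
    by_cases hzc : Z n ω ∈ C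
    · rw [if_pos hzc]
      have hd := hBdrift _ hzc
      have hstep : lam₀ ^ (-((n + 1 : ℕ) : ℤ)) * B ^ (-((N n ω + 1 : ℕ) : ℤ)) *
          (lam₀ * B * V (Z n ω)) = lam₀ ^ (-(n : ℤ)) * B ^ (-(N n ω : ℤ)) * V (Z n ω) := by
        have e1 := azpow hlamne n
        have e2 := azpow hBne (N n ω)
        calc lam₀ ^ (-((n + 1 : ℕ) : ℤ)) * B ^ (-((N n ω + 1 : ℕ) : ℤ)) *
              (lam₀ * B * V (Z n ω))
            = (lam₀ ^ (-((n + 1 : ℕ) : ℤ)) * lam₀) * ((B ^ (-((N n ω + 1 : ℕ) : ℤ)) * B) *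
              V (Z n ω)) := by ring
          _ = lam₀ ^ (-(n : ℤ)) * (B ^ (-(N n ω : ℤ)) * V (Z n ω)) := by rw [e1, e2]
          _ = lam₀ ^ (-(n : ℤ)) * B ^ (-(N n ω : ℤ)) * V (Z n ω) := by ring
      calc lam₀ ^ (-((n + 1 : ℕ) : ℤ)) * B ^ (-((N n ω + 1 : ℕ) : ℤ)) * ∫ y, V y ∂(K (Z n ω))
          ≤ lam₀ ^ (-((n + 1 : ℕ) : ℤ)) * B ^ (-((N n ω + 1 : ℕ) : ℤ)) *
            (lam₀ * B * V (Z n ω)) :=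
            mul_le_mul_of_nonneg_left hd (mul_pos (hzlampos _) (hzBpos _)).le
        _ = _ := hstep
    · rw [if_neg hzc, Nat.add_zero]
      have hd := hdrift _ hzc
      have hstep : lam₀ ^ (-((n + 1 : ℕ) : ℤ)) * B ^ (-((N n ω : ℕ) : ℤ)) *
          (lam₀ * V (Z n ω)) = lam₀ ^ (-(n : ℤ)) * B ^ (-(N n ω : ℤ)) * V (Z n ω) := by
        have e1 := azpow hlamne n
        calc lam₀ ^ (-((n + 1 : ℕ) : ℤ)) * B ^ (-((N n ω : ℕ) : ℤ)) * (lam₀ * V (Z n ω))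
            = (lam₀ ^ (-((n + 1 : ℕ) : ℤ)) * lam₀) * (B ^ (-((N n ω : ℕ) : ℤ)) *
              V (Z n ω)) := by ring
          _ = lam₀ ^ (-(n : ℤ)) * (B ^ (-(N n ω : ℤ)) * V (Z n ω)) := by rw [e1]
          _ = _ := by ring
      calc lam₀ ^ (-((n + 1 : ℕ) : ℤ)) * B ^ (-((N n ω : ℕ) : ℤ)) * ∫ y, V y ∂(K (Z n ω))
          ≤ lam₀ ^ (-((n + 1 : ℕ) : ℤ)) * B ^ (-((N n ω : ℕ) : ℤ)) * (lam₀ * V (Z n ω)) :=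
            mul_le_mul_of_nonneg_left hd (mul_pos (hzlampos _) (hzBpos _)).le
        _ = _ := hstep
  have hsuper : Supermartingale M 𝔽 P := supermartingale_nat hMadp hMint hkey
  have hVnn : 0 ≤ ∫ ω, V (Z 0 ω) ∂P :=
    integral_nonneg fun ω => le_trans zero_le_one (hV1 _)
  have hbound : ∀ n j : ℕ, (P {ω | n < τ ω}).toReal
      ≤ (1 - ω₀) ^ j + (∫ ω, V (Z 0 ω) ∂P) * lam₀ ^ n * B ^ ((j : ℤ) - 1) := by
    intro n j
    set A : ℕ → Set Ωp := fun k => {ω | ∀ i ≤ k, Z i ω ∉ G} with hA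
    have hAapp : ∀ k ω, ω ∈ A k ↔ ∀ i ≤ k, Z i ω ∉ G := fun k ω => Iff.rfl
    have hAmeas : ∀ {k l : ℕ}, k ≤ l → MeasurableSet[𝔽 l] (A k) := by
      intro k l h
      have he : A k = ⋂ i, ⋂ (_ : i ≤ k), (Z i) ⁻¹' Gᶜ := by
        ext ω
        simp [hA, Set.mem_iInter]
      rw [he]
      exact MeasurableSet.iInter fun i => MeasurableSet.iInter fun hi =>
        (hZ𝔽 (hi.trans h)) hG.compl
    have hAm : ∀ k, MeasurableSet (A k) := fun k => (𝔽.le k) _ (hAmeas le_rfl)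
    have hAsucc : ∀ k, A (k + 1) = A k ∩ (Z (k + 1)) ⁻¹' Gᶜ := by
      intro k; ext ω
      simp only [hA, Set.mem_setOf_eq, Set.mem_inter_iff, Set.mem_preimage, Set.mem_compl_iff]
      constructor
      · exact fun h => ⟨fun i hi => h i (hi.trans (Nat.le_succ k)), h (k + 1) le_rfl⟩
      · rintro ⟨h1, h2⟩ i hi
        by_cases hik : i ≤ k
        · exact h1 i hik
        · have : i = k + 1 := by omega
          subst this; exact h2
    have hω' : (0 : ℝ) ≤ 1 - ω₀ := by linarith
    have h1ω : (1 : ℝ) - ω₀ ≤ 1 := by linarith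
    set W : ℕ → Ωp → ℝ :=
      fun k ω => (A k).indicator (fun _ => (1 : ℝ)) ω * (1 - ω₀) ^ (j - min (N k ω) j)
      with hWdef
    have hWapp : ∀ k ω,
        W k ω = (A k).indicator (fun _ => (1 : ℝ)) ω * (1 - ω₀) ^ (j - min (N k ω) j) :=
      fun k ω => rfl
    have hind01 : ∀ (s : Set Ωp) (ω : Ωp), 0 ≤ s.indicator (fun _ => (1 : ℝ)) ω ∧
        s.indicator (fun _ => (1 : ℝ)) ω ≤ 1 := by
      intro s ω
      by_cases h : ω ∈ s
      · rw [Set.indicator_of_mem h]; exact ⟨zero_le_one, le_rfl⟩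
      · rw [Set.indicator_of_notMem h]; exact ⟨le_rfl, zero_le_one⟩
    have hWnonneg : ∀ k ω, 0 ≤ W k ω := fun k ω =>
      mul_nonneg (hind01 _ _).1 (pow_nonneg hω' _)
    have hWle1 : ∀ k ω, W k ω ≤ 1 := by
      intro k ω
      rw [hWapp]
      calc (A k).indicator (fun _ => (1 : ℝ)) ω * (1 - ω₀) ^ (j - min (N k ω) j)
          ≤ 1 * 1 := mul_le_mul (hind01 _ _).2 (pow_le_one₀ hω' h1ω) (pow_nonneg hω' _)
            zero_le_one
        _ = 1 := mul_one 1
    have hWmeas : ∀ k, Measurable[𝔽 k] (W k) := by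
      intro k
      rw [hWdef]
      exact (Measurable.indicator measurable_const (hAmeas le_rfl)).mul
        ((measurable_from_top (f := fun i : ℕ => (1 - ω₀) ^ (j - min i j))).comp
          (hNmeas (Nat.le_succ k)))
    have hWint : ∀ k, Integrable (W k) P := by
      intro k
      refine Integrable.mono' (integrable_const (1 : ℝ))
        ((hWmeas k).mono (𝔽.le k) le_rfl).aestronglyMeasurable ?_
      exact Filter.Eventually.of_forall fun ω => by
        rw [Real.norm_eq_abs, abs_of_nonneg (hWnonneg k ω)]; exact hWle1 k ω
    -- one-step decrease of the expectation of W
    have hKle1 : ∀ z : S, ((K z) Gᶜ).toReal ≤ 1 := by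
      intro z
      have h := prob_le_one (μ := K z) (s := Gᶜ)
      calc ((K z) Gᶜ).toReal ≤ (1 : ENNReal).toReal := ENNReal.toReal_mono ENNReal.one_ne_top h
        _ = 1 := by simp
    have hKsmall : ∀ z ∈ C, ((K z) Gᶜ).toReal ≤ 1 - ω₀ := by
      intro z hz
      have h1 : ω₀ ≤ ((K z) G).toReal := by
        calc ω₀ = (ENNReal.ofReal ω₀).toReal := (ENNReal.toReal_ofReal hω₀.le).symm
          _ ≤ ((K z) G).toReal := ENNReal.toReal_mono (measure_ne_top _ _) (hsmall z hz)
      have h2 : (K z) Gᶜ = 1 - (K z) G := by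
        rw [measure_compl hG (measure_ne_top _ _), measure_univ]
      rw [h2, ENNReal.toReal_sub_of_le prob_le_one ENNReal.one_ne_top]
      simp only [ENNReal.toReal_one]
      linarith
    have hWstep : ∀ k, ∫ ω, W (k + 1) ω ∂P ≤ ∫ ω, W k ω ∂P := by
      intro k
      set g : S → ℝ := Gᶜ.indicator (fun _ => (1 : ℝ)) with hgdef
      have hgm : Measurable g := measurable_const.indicator hG.compl
      have hg01 : ∀ y, 0 ≤ g y ∧ g y ≤ 1 := by
        intro y
        by_cases h : y ∈ Gᶜ
        · rw [hgdef, Set.indicator_of_mem h]; exact ⟨zero_le_one, le_rfl⟩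
        · rw [hgdef, Set.indicator_of_notMem h]; exact ⟨le_rfl, zero_le_one⟩
      have hgint : Integrable (fun ω => g (Z (k + 1) ω)) P := by
        refine Integrable.mono' (integrable_const (1 : ℝ))
          (hgm.comp (hZm (k + 1))).aestronglyMeasurable ?_
        exact Filter.Eventually.of_forall fun ω => by
          rw [Real.norm_eq_abs, abs_of_nonneg (hg01 _).1]; exact (hg01 _).2
      set F' : Ωp → ℝ :=
        fun ω => (A k).indicator (fun _ => (1 : ℝ)) ω * (1 - ω₀) ^ (j - min (N (k + 1) ω) j)
        with hF'def
      have hF'm : StronglyMeasurable[𝔽 k] F' := by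
        rw [hF'def]
        exact ((Measurable.indicator measurable_const (hAmeas le_rfl)).mul
          ((measurable_from_top (f := fun i : ℕ => (1 - ω₀) ^ (j - min i j))).comp
            (hNmeas le_rfl))).stronglyMeasurable
      have hF'nonneg : ∀ ω, 0 ≤ F' ω := fun ω =>
        mul_nonneg (hind01 _ _).1 (pow_nonneg hω' _)
      have hWeq : W (k + 1) = F' * fun ω => g (Z (k + 1) ω) := by
        funext ω
        show W (k + 1) ω = F' ω * g (Z (k + 1) ω)
        rw [hWapp, hAsucc k]
        show (A k ∩ Z (k + 1) ⁻¹' Gᶜ).indicator (fun _ => (1 : ℝ)) ω *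
            (1 - ω₀) ^ (j - min (N (k + 1) ω) j)
          = (A k).indicator (fun _ => (1 : ℝ)) ω * (1 - ω₀) ^ (j - min (N (k + 1) ω) j) *
            Gᶜ.indicator (fun _ => (1 : ℝ)) (Z (k + 1) ω)
        rw [Set.indicator_apply, Set.indicator_apply, Set.indicator_apply]
        simp only [Set.mem_inter_iff, Set.mem_preimage]
        by_cases h1 : ω ∈ A k <;> by_cases h2 : Z (k + 1) ω ∈ Gᶜ <;>
          simp [h1, h2]
      have hcond : P[W (k + 1)|𝔽 k] =ᵐ[P] F' * P[(fun ω => g (Z (k + 1) ω))|𝔽 k] := by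
        rw [hWeq]
        exact condExp_mul_of_stronglyMeasurable_left hF'm (hWeq ▸ hWint (k + 1)) hgint
      have hcond2 : F' * P[(fun ω => g (Z (k + 1) ω))|𝔽 k]
          =ᵐ[P] F' * fun ω => ∫ y, g y ∂(K (Z k ω)) :=
        Filter.EventuallyEq.mul (Filter.EventuallyEq.refl _ F') (hMarkov k g hgm hgint)
      have hpt : ∀ ω, F' ω * (∫ y, g y ∂(K (Z k ω))) ≤ W k ω := by
        intro ω
        have hgK : ∫ y, g y ∂(K (Z k ω)) = ((K (Z k ω)) Gᶜ).toReal := by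
          rw [hgdef, integral_indicator_const (1 : ℝ) hG.compl, smul_eq_mul, mul_one, Measure.real_def]
        rw [hgK]
        by_cases hωA : ω ∈ A k
        swap
        · rw [hF'def]
          show (A k).indicator (fun _ => (1 : ℝ)) ω * (1 - ω₀) ^ (j - min (N (k + 1) ω) j) *
            ((K (Z k ω)) Gᶜ).toReal ≤ W k ω
          rw [Set.indicator_of_notMem hωA]
          simpa using hWnonneg k ω
        have hWkω : W k ω = (1 - ω₀) ^ (j - min (N k ω) j) := by
          rw [hWapp, Set.indicator_of_mem hωA, one_mul]
        have hF'ω : F' ω = (1 - ω₀) ^ (j - min (N (k + 1) ω) j) := by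
          rw [hF'def]
          show (A k).indicator (fun _ => (1 : ℝ)) ω * (1 - ω₀) ^ (j - min (N (k + 1) ω) j)
            = (1 - ω₀) ^ (j - min (N (k + 1) ω) j)
          rw [Set.indicator_of_mem hωA, one_mul]
        rw [hWkω, hF'ω]
        by_cases hzc : Z k ω ∈ C
        · rw [hNsucc k ω, if_pos hzc]
          have hKle := hKsmall _ hzc
          by_cases hnj : N k ω < j
          · rw [min_eq_left (by omega : N k ω + 1 ≤ j), min_eq_left (by omega : N k ω ≤ j)]
            have hps : (1 - ω₀) ^ (j - (N k ω + 1)) * (1 - ω₀) = (1 - ω₀) ^ (j - N k ω) := by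
              rw [← pow_succ]
              congr 1
              omega
            calc (1 - ω₀) ^ (j - (N k ω + 1)) * ((K (Z k ω)) Gᶜ).toReal
                ≤ (1 - ω₀) ^ (j - (N k ω + 1)) * (1 - ω₀) :=
                  mul_le_mul_of_nonneg_left hKle (pow_nonneg hω' _)
              _ = (1 - ω₀) ^ (j - N k ω) := hps
          · rw [min_eq_right (by omega : j ≤ N k ω + 1), min_eq_right (by omega : j ≤ N k ω),
              Nat.sub_self, pow_zero, one_mul]
            exact (hKle1 _).trans (by norm_num)
        · rw [hNsucc k ω, if_neg hzc, Nat.add_zero]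
          calc (1 - ω₀) ^ (j - min (N k ω) j) * ((K (Z k ω)) Gᶜ).toReal
              ≤ (1 - ω₀) ^ (j - min (N k ω) j) * 1 :=
                mul_le_mul_of_nonneg_left (hKle1 _) (pow_nonneg hω' _)
            _ = (1 - ω₀) ^ (j - min (N k ω) j) := mul_one _
      calc ∫ ω, W (k + 1) ω ∂P = ∫ ω, (P[W (k + 1)|𝔽 k]) ω ∂P :=
            (integral_condExp (𝔽.le k)).symm
        _ ≤ ∫ ω, W k ω ∂P := by
            refine integral_mono_ae integrable_condExp (hWint k) ?_
            exact (hcond.trans hcond2).trans_le (Filter.Eventually.of_forall hpt)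
    have hWbound : ∀ k, ∫ ω, W k ω ∂P ≤ (1 - ω₀) ^ j := by
      intro k
      induction k with
      | zero =>
        have hpt : ∀ ω, W 0 ω ≤ (1 - ω₀) ^ j := by
          intro ω
          rw [hWapp, hN0 ω]
          simp only [Nat.zero_min, Nat.sub_zero]
          calc (A 0).indicator (fun _ => (1 : ℝ)) ω * (1 - ω₀) ^ j
              ≤ 1 * (1 - ω₀) ^ j :=
                mul_le_mul_of_nonneg_right (hind01 _ _).2 (pow_nonneg hω' _)
            _ = (1 - ω₀) ^ j := one_mul _
        calc ∫ ω, W 0 ω ∂P ≤ ∫ _ω, (1 - ω₀) ^ j ∂P :=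
              integral_mono (hWint 0) (integrable_const _) hpt
          _ = (1 - ω₀) ^ j := by simp
      | succ k ih => exact (hWstep k).trans ih
    -- the two events
    set E1 : Set Ωp := A n ∩ {ω | j ≤ N n ω} with hE1def
    set E2 : Set Ωp := A n ∩ {ω | N n ω < j} with hE2def
    have hE1m : MeasurableSet E1 := (hAm n).inter (hNm n measurableSet_Ici)
    have hE2m : MeasurableSet E2 := (hAm n).inter (hNm n (measurableSet_Iio))
    have hE1 : (P E1).toReal ≤ (1 - ω₀) ^ j := by
      have hpt : ∀ ω, E1.indicator (fun _ => (1 : ℝ)) ω ≤ W n ω := by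
        intro ω
        by_cases hω : ω ∈ E1
        · rw [Set.indicator_of_mem hω]
          obtain ⟨h1, h2⟩ := hω
          rw [hWapp, min_eq_right h2, Nat.sub_self, pow_zero, mul_one,
            Set.indicator_of_mem h1]
        · rw [Set.indicator_of_notMem hω]
          exact hWnonneg n ω
      calc (P E1).toReal = ∫ ω, E1.indicator (fun _ => (1 : ℝ)) ω ∂P := by
            rw [integral_indicator_const (1 : ℝ) hE1m, smul_eq_mul, mul_one, Measure.real_def]
        _ ≤ ∫ ω, W n ω ∂P := integral_mono ((integrable_const (1 : ℝ)).indicator hE1m)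
            (hWint n) hpt
        _ ≤ (1 - ω₀) ^ j := hWbound n
    have hE2 : (P E2).toReal ≤ (∫ ω, V (Z 0 ω) ∂P) * lam₀ ^ n * B ^ ((j : ℤ) - 1) := by
      set a : ℝ := lam₀ ^ (-(n : ℤ)) * B ^ ((1 : ℤ) - j) with hadef
      have hapos : 0 < a := mul_pos (hzlampos _) (hzBpos _)
      have hlow : ∀ ω ∈ E2, a ≤ M n ω := by
        rintro ω ⟨-, h2⟩
        have h2' : N n ω < j := h2
        have hz : (1 : ℤ) - j ≤ -(N n ω : ℤ) := by
          have : (N n ω : ℤ) < (j : ℤ) := by exact_mod_cast h2'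
          omega
        calc a = lam₀ ^ (-(n : ℤ)) * B ^ ((1 : ℤ) - j) * 1 := (mul_one _).symm
          _ ≤ lam₀ ^ (-(n : ℤ)) * B ^ (-(N n ω : ℤ)) * V (Z n ω) :=
            mul_le_mul (mul_le_mul_of_nonneg_left (zpow_le_zpow_right₀ hB1 hz)
              (hzlampos _).le) (hV1 _) zero_le_one
              (mul_pos (hzlampos _) (hzBpos _)).le
          _ = M n ω := (hM n ω).symm
      have hM0eq : ∫ ω, M 0 ω ∂P = ∫ ω, V (Z 0 ω) ∂P := by
        refine integral_congr_ae (Filter.Eventually.of_forall fun ω => ?_)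
        rw [hM 0 ω, hN0 ω]
        norm_num
      have hchain : a * (P E2).toReal ≤ ∫ ω, V (Z 0 ω) ∂P := by
        calc a * (P E2).toReal = ∫ _ω in E2, a ∂P := by
              rw [setIntegral_const, smul_eq_mul, Measure.real_def]; ring
          _ ≤ ∫ ω in E2, M n ω ∂P :=
              setIntegral_mono_on (integrableOn_const (measure_ne_top _ _))
                ((hMint n).integrableOn) hE2m hlow
          _ ≤ ∫ ω, M n ω ∂P := setIntegral_le_integral (hMint n)
              (Filter.Eventually.of_forall fun ω => (hMpos n ω).le)
          _ ≤ ∫ ω, M 0 ω ∂P := by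
              simpa using hsuper.setIntegral_le (Nat.zero_le n) MeasurableSet.univ
          _ = ∫ ω, V (Z 0 ω) ∂P := hM0eq
      have hPle : (P E2).toReal ≤ (∫ ω, V (Z 0 ω) ∂P) / a :=
        (le_div_iff₀ hapos).2 (by linarith [hchain])
      have hdiv : (∫ ω, V (Z 0 ω) ∂P) / a
          = (∫ ω, V (Z 0 ω) ∂P) * lam₀ ^ n * B ^ ((j : ℤ) - 1) := by
        rw [hadef, div_eq_mul_inv, mul_inv, ← zpow_neg, ← zpow_neg, neg_neg, neg_sub,
          zpow_natCast, mul_assoc]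
      rw [← hdiv]
      exact hPle
    have hsub : {ω | n < τ ω} ⊆ E1 ∪ E2 := by
      intro ω hω
      have hωτ : n < τ ω := hω
      have hωA : ω ∈ A n := by
        intro i hi hig
        have h1 : τ ω ≤ i := by
          rw [hτ ω]
          exact Nat.sInf_le hig
        omega
      by_cases hj : j ≤ N n ω
      · exact Or.inl ⟨hωA, hj⟩
      · exact Or.inr ⟨hωA, Nat.lt_of_not_le hj⟩
    calc (P {ω | n < τ ω}).toReal ≤ (P (E1 ∪ E2)).toReal :=
          ENNReal.toReal_mono (measure_ne_top _ _) (measure_mono hsub)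
      _ ≤ ((P E1) + (P E2)).toReal := by
          refine ENNReal.toReal_mono ?_ (measure_union_le _ _)
          exact ENNReal.add_ne_top.2 ⟨measure_ne_top _ _, measure_ne_top _ _⟩
      _ = (P E1).toReal + (P E2).toReal :=
          ENNReal.toReal_add (measure_ne_top _ _) (measure_ne_top _ _)
      _ ≤ _ := add_le_add hE1 hE2
  refine ⟨hsuper, hbound, ?_⟩
  intro m₀ hm₀ hκ
  set κ₁ : ℝ := (1 - ω₀) ^ ((1 : ℝ) / m₀) with hκ₁def
  set κ₂ : ℝ := lam₀ * B ^ ((1 : ℝ) / m₀) with hκ₂def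
  have hm₀R : (0 : ℝ) < m₀ := by exact_mod_cast hm₀
  have hω' : (0 : ℝ) ≤ 1 - ω₀ := by linarith
  have h1ω : (1 : ℝ) - ω₀ < 1 := by linarith
  have hκ₂pos : 0 < κ₂ := mul_pos hlam0 (Real.rpow_pos_of_pos hB0 _)
  have hκ₁nonneg : 0 ≤ κ₁ := Real.rpow_nonneg hω' _
  have hexp0 : ((1 : ℝ) / m₀) ≠ 0 := by positivity
  have hκ₁lt1 : κ₁ < 1 := by
    rcases eq_or_lt_of_le hω' with h | h
    · rw [hκ₁def, ← h, Real.zero_rpow hexp0]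
      norm_num
    · exact Real.rpow_lt_one hω' h1ω (by positivity)
  set κ₀ := max κ₁ κ₂ with hκ₀def
  have hκ₀pos : 0 < κ₀ := lt_of_lt_of_le hκ₂pos (le_max_right _ _)
  have hκ₀lt1 : κ₀ < 1 := max_lt hκ₁lt1 hκ
  refine ⟨1 + ∫ ω, V (Z 0 ω) ∂P, by linarith, κ₀, ⟨hκ₀pos, hκ₀lt1⟩, fun n => ?_⟩
  set j := n / m₀ + 1 with hjdef
  have claim1 : (1 - ω₀) ^ j ≤ κ₁ ^ n := by
    have hmul : n ≤ m₀ * j := by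
      have h1 : m₀ * (n / m₀) + n % m₀ = n := Nat.div_add_mod n m₀
      have h2 : n % m₀ < m₀ := Nat.mod_lt n hm₀
      calc n = m₀ * (n / m₀) + n % m₀ := h1.symm
        _ ≤ m₀ * (n / m₀) + m₀ := Nat.add_le_add_left h2.le _
        _ = m₀ * (n / m₀ + 1) := by ring
        _ = m₀ * j := by rw [hjdef]
    rcases eq_or_lt_of_le hω' with h | h
    · have hκ₁0 : κ₁ = 0 := by rw [hκ₁def, ← h, Real.zero_rpow hexp0]
      rw [hκ₁0]
      calc (1 - ω₀) ^ j = 0 := by rw [← h]; exact zero_pow (by rw [hjdef]; exact Nat.succ_ne_zero _)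
        _ ≤ 0 ^ n := pow_nonneg le_rfl n
    · have hlhs : (1 - ω₀) ^ j = (1 - ω₀) ^ ((j : ℝ)) := (Real.rpow_natCast _ j).symm
      have hrhs : κ₁ ^ n = (1 - ω₀) ^ ((n : ℝ) / m₀) := by
        rw [hκ₁def, ← Real.rpow_natCast ((1 - ω₀) ^ ((1 : ℝ) / m₀)) n, ← Real.rpow_mul hω']
        congr 1
        ring
      rw [hlhs, hrhs]
      apply Real.rpow_le_rpow_of_exponent_ge h (by linarith)
      rw [div_le_iff₀ hm₀R]
      have hc : (n : ℝ) ≤ (m₀ : ℝ) * (j : ℝ) := by exact_mod_cast hmul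
      linarith
  have claim2 : (∫ ω, V (Z 0 ω) ∂P) * lam₀ ^ n * B ^ ((j : ℤ) - 1)
      ≤ (∫ ω, V (Z 0 ω) ∂P) * κ₂ ^ n := by
    have hzj : ((j : ℤ) - 1) = ((n / m₀ : ℕ) : ℤ) := by rw [hjdef]; push_cast; ring
    rw [hzj, zpow_natCast]
    have hBle : B ^ (n / m₀ : ℕ) ≤ B ^ ((n : ℝ) / m₀) := by
      rw [← Real.rpow_natCast B (n / m₀)]
      apply Real.rpow_le_rpow_of_exponent_le hB1
      rw [le_div_iff₀ hm₀R]
      exact_mod_cast Nat.div_mul_le_self n m₀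
    have hκ₂n : κ₂ ^ n = lam₀ ^ n * B ^ ((n : ℝ) / m₀) := by
      rw [hκ₂def, mul_pow, ← Real.rpow_natCast (B ^ ((1 : ℝ) / m₀)) n,
        ← Real.rpow_mul hB0.le]
      congr 1
      ring
    rw [hκ₂n, ← mul_assoc]
    refine mul_le_mul_of_nonneg_left hBle ?_
    exact mul_nonneg hVnn (pow_nonneg hlam0.le n)
  calc (P {ω | n < τ ω}).toReal
      ≤ (1 - ω₀) ^ j + (∫ ω, V (Z 0 ω) ∂P) * lam₀ ^ n * B ^ ((j : ℤ) - 1) := hbound n j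
    _ ≤ κ₁ ^ n + (∫ ω, V (Z 0 ω) ∂P) * κ₂ ^ n := add_le_add claim1 claim2
    _ ≤ κ₀ ^ n + (∫ ω, V (Z 0 ω) ∂P) * κ₀ ^ n :=
        add_le_add (pow_le_pow_left₀ hκ₁nonneg (le_max_left _ _) n)
          (mul_le_mul_of_nonneg_left (pow_le_pow_left₀ hκ₂pos.le (le_max_right _ _) n) hVnn)
    _ = (1 + ∫ ω, V (Z 0 ω) ∂P) * κ₀ ^ n := by ring
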